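/- arXiv:2504.11865 — 3 statements merged into one kernel-verified Lean document; each statement's English description precedes it below -/
import Mathlib

section
/- For the Apéry polynomial f_n(x) = Σ_{k=0}^n C(n,k)^2 C(n+k,k) x^k, the derivative at 1 satisfies 5n f_n'(1) = (n+1)^2 f_{n+1}(1) − (n+1)(8n+3) f_n(1) for all n ≥ 1. -/
open Polynomial

/-- The Apéry polynomial. -/
noncomputable def aperyPoly (n : ℕ) : Polynomial ℝ :=
  ∑ k ∈ Finset.range (n + 1),
    C (((n.choose k) ^ 2 * ((n + k).choose k) : ℕ) : ℝ) * X ^ k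

/-- Real-valued Apéry summand. -/
noncomputable def aA (n k : ℕ) : ℝ := (((n.choose k) ^ 2 * ((n + k).choose k) : ℕ) : ℝ)

/-- Telescoping certificate. -/
noncomputable def gg (n k : ℕ) : ℝ :=
  (k : ℝ) * (7 * (n : ℝ) + 7 - 5 * (k : ℝ)) * ((n.choose (k - 1) : ℕ) : ℝ) ^ 2
    * (((n + k).choose k : ℕ) : ℝ)

lemma alg (kr jr a b c d e f : ℝ)
    (hk : kr ≠ 0) (hj : jr + 1 ≠ 0) (hn : kr + jr + 1 ≠ 0) (hk1 : kr + 1 ≠ 0)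
    (h1 : a * kr = c * (jr + 1))
    (h2 : d * kr = c * (kr + jr + 1))
    (h3 : e * (kr + jr + 1) = b * (2 * kr + jr + 1))
    (h4 : f * (kr + 1) = b * (2 * kr + jr + 1)) :
    5 * (kr + jr) * kr * (a ^ 2 * b) + (kr + jr + 1) * (8 * (kr + jr) + 3) * (a ^ 2 * b)
        + kr * (7 * (kr + jr) + 7 - 5 * kr) * (c ^ 2 * b)
      = (kr + jr + 1) ^ 2 * (d ^ 2 * e)
        + (kr + 1) * (7 * (kr + jr) + 2 - 5 * kr) * (a ^ 2 * f) := by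
  have hc : c = a * kr / (jr + 1) := by field_simp; linarith
  have hd : d = c * (kr + jr + 1) / kr := by field_simp; linarith
  have he : e = b * (2 * kr + jr + 1) / (kr + jr + 1) := by field_simp; linarith
  have hf : f = b * (2 * kr + jr + 1) / (kr + 1) := by field_simp; linarith
  rw [hd, he, hf, hc]
  field_simp
  ring

lemma key (n k : ℕ) (hk : k ≤ n + 1) :
    5 * (n : ℝ) * k * aA n k + ((n : ℝ) + 1) * (8 * n + 3) * aA n k + gg n k
      = ((n : ℝ) + 1) ^ 2 * aA (n + 1) k + gg n (k + 1) := by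
  rcases Nat.eq_zero_or_pos k with rfl | hk1
  · norm_num [aA, gg, Nat.choose_one_right]
    push_cast
    ring
  rcases Nat.lt_or_ge n k with hlt | hle
  · -- k = n + 1
    have hkn : k = n + 1 := by omega
    subst hkn
    have hz : n.choose (n + 1) = 0 := Nat.choose_eq_zero_of_lt (by omega)
    have hz2 : gg n (n + 1 + 1) = 0 := by
      simp [gg, Nat.add_sub_cancel, hz]
    have hA : aA n (n + 1) = 0 := by simp [aA, hz]
    have hpas : (2 * n + 2).choose (n + 1)
        = (2 * n + 1).choose n + (2 * n + 1).choose (n + 1) := by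
      have h := Nat.choose_succ_succ (2 * n + 1) n
      convert h using 2 <;> omega
    have hsym : (2 * n + 1).choose n = (2 * n + 1).choose (n + 1) := by
      have h := Nat.choose_symm (show n + 1 ≤ 2 * n + 1 by omega)
      rw [show 2 * n + 1 - (n + 1) = n from by omega] at h
      exact h
    have hA1 : aA (n + 1) (n + 1) = (((2 * n + 2).choose (n + 1) : ℕ) : ℝ) := by
      simp [aA, Nat.choose_self, show n + 1 + (n + 1) = 2 * n + 2 from by ring]
    have hg : gg n (n + 1)
        = ((n : ℝ) + 1) * (2 * (n : ℝ) + 2) * (((2 * n + 1).choose (n + 1) : ℕ) : ℝ) := by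
      simp only [gg, Nat.add_sub_cancel, Nat.choose_self,
        show n + (n + 1) = 2 * n + 1 from by ring]
      push_cast
      ring
    rw [hA, hA1, hg, hz2, hpas, hsym]
    push_cast
    ring
  · -- 1 ≤ k ≤ n
    obtain ⟨m, rfl⟩ : ∃ m, k = m + 1 := ⟨k - 1, by omega⟩
    obtain ⟨j, rfl⟩ : ∃ j, n = m + 1 + j := ⟨n - (m + 1), by omega⟩
    have h1 : ((((m + 1 + j).choose (m + 1) : ℕ) : ℝ)) * ((m : ℝ) + 1)
        = (((m + 1 + j).choose m : ℕ) : ℝ) * ((j : ℝ) + 1) := by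
      have h := Nat.choose_succ_right_eq (m + 1 + j) m
      rw [show m + 1 + j - m = j + 1 from by omega] at h
      exact_mod_cast h
    have h2 : ((((m + 1 + j + 1).choose (m + 1) : ℕ) : ℝ)) * ((m : ℝ) + 1)
        = (((m + 1 + j).choose m : ℕ) : ℝ) * (((m : ℝ) + 1) + (j : ℝ) + 1) := by
      have h := Nat.add_one_mul_choose_eq (m + 1 + j) m
      have h' := congrArg (Nat.cast (R := ℝ)) h
      push_cast at h'
      linear_combination -h'
    have h3 : ((((m + 1 + j + 1 + (m + 1)).choose (m + 1) : ℕ) : ℝ)) * (((m : ℝ) + 1) + (j : ℝ) + 1)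
        = (((m + 1 + j + (m + 1)).choose (m + 1) : ℕ) : ℝ) * (2 * ((m : ℝ) + 1) + (j : ℝ) + 1) := by
      have h := Nat.add_one_mul_choose_eq (m + 1 + j + (m + 1)) (m + 1 + j)
      have s1 : (m + 1 + j + (m + 1)).choose (m + 1 + j)
          = (m + 1 + j + (m + 1)).choose (m + 1) := by
        have hs := Nat.choose_symm (show m + 1 ≤ m + 1 + j + (m + 1) by omega)
        rw [show m + 1 + j + (m + 1) - (m + 1) = m + 1 + j from by omega] at hs
        exact hs
      have s2 : (m + 1 + j + (m + 1) + 1).choose (m + 1 + j + 1)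
          = (m + 1 + j + 1 + (m + 1)).choose (m + 1) := by
        have hs := Nat.choose_symm (show m + 1 ≤ m + 1 + j + (m + 1) + 1 by omega)
        rw [show m + 1 + j + (m + 1) + 1 - (m + 1) = m + 1 + j + 1 from by omega] at hs
        rw [hs, show m + 1 + j + (m + 1) + 1 = m + 1 + j + 1 + (m + 1) from by omega]
      rw [s1, s2] at h
      have h' := congrArg (Nat.cast (R := ℝ)) h
      push_cast at h'
      linear_combination -h'
    have h4 : ((((m + 1 + j + (m + 1 + 1)).choose (m + 1 + 1) : ℕ) : ℝ)) * (((m : ℝ) + 1) + 1)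
        = (((m + 1 + j + (m + 1)).choose (m + 1) : ℕ) : ℝ) * (2 * ((m : ℝ) + 1) + (j : ℝ) + 1) := by
      have h := Nat.add_one_mul_choose_eq (m + 1 + j + (m + 1)) (m + 1)
      rw [show m + 1 + j + (m + 1) + 1 = m + 1 + j + (m + 1 + 1) from by omega] at h
      have h' := congrArg (Nat.cast (R := ℝ)) h
      push_cast at h'
      linear_combination -h'
    have H := alg ((m : ℝ) + 1) (j : ℝ)
      (((m + 1 + j).choose (m + 1) : ℕ) : ℝ)
      (((m + 1 + j + (m + 1)).choose (m + 1) : ℕ) : ℝ)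
      (((m + 1 + j).choose m : ℕ) : ℝ)
      (((m + 1 + j + 1).choose (m + 1) : ℕ) : ℝ)
      (((m + 1 + j + 1 + (m + 1)).choose (m + 1) : ℕ) : ℝ)
      (((m + 1 + j + (m + 1 + 1)).choose (m + 1 + 1) : ℕ) : ℝ)
      (by positivity) (by positivity) (by positivity) (by positivity)
      h1 h2 h3 h4
    simp only [aA, gg, Nat.add_sub_cancel]
    push_cast at H ⊢
    linear_combination H

lemma sum_eq (n : ℕ) :
    ∑ k ∈ Finset.range (n + 2),
        (5 * (n : ℝ) * k * aA n k + ((n : ℝ) + 1) * (8 * n + 3) * aA n k)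
      = ∑ k ∈ Finset.range (n + 2), ((n : ℝ) + 1) ^ 2 * aA (n + 1) k := by
  have tele : ∑ k ∈ Finset.range (n + 2), (gg n (k + 1) - gg n k)
      = gg n (n + 2) - gg n 0 := Finset.sum_range_sub (gg n) (n + 2)
  have hg0 : gg n 0 = 0 := by simp [gg]
  have hgend : gg n (n + 2) = 0 := by
    simp [gg, Nat.add_sub_cancel, Nat.choose_eq_zero_of_lt (show n < n + 1 by omega)]
  have hcongr : ∑ k ∈ Finset.range (n + 2),
      (5 * (n : ℝ) * k * aA n k + ((n : ℝ) + 1) * (8 * n + 3) * aA n k)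
      = ∑ k ∈ Finset.range (n + 2),
        (((n : ℝ) + 1) ^ 2 * aA (n + 1) k + (gg n (k + 1) - gg n k)) := by
    refine Finset.sum_congr rfl fun k hk => ?_
    have hkle : k ≤ n + 1 := by
      have := Finset.mem_range.mp hk; omega
    have := key n k hkle
    linear_combination this
  rw [hcongr, Finset.sum_add_distrib, tele, hg0, hgend]
  ring

lemma eval_apery (n : ℕ) :
    (aperyPoly n).eval 1 = ∑ k ∈ Finset.range (n + 1), aA n k := by
  simp [aperyPoly, aA, eval_finset_sum]

lemma eval_deriv_apery (n : ℕ) :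
    (derivative (aperyPoly n)).eval 1 = ∑ k ∈ Finset.range (n + 1), aA n k * k := by
  unfold aperyPoly
  rw [derivative_sum]
  rw [eval_finset_sum]
  refine Finset.sum_congr rfl fun k hk => ?_
  rw [derivative_C_mul_X_pow]
  simp [aA]

theorem apery_deriv_recurrence (n : ℕ) (hn : 1 ≤ n) :
    5 * (n : ℝ) * (derivative (aperyPoly n)).eval 1 =
      ((n : ℝ) + 1) ^ 2 * (aperyPoly (n + 1)).eval 1
        - ((n : ℝ) + 1) * (8 * n + 3) * (aperyPoly n).eval 1 := by
  rw [eval_apery, eval_apery, eval_deriv_apery]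
  have hz : aA n (n + 1) = 0 := by
    simp [aA, Nat.choose_eq_zero_of_lt (show n < n + 1 by omega)]
  have h1 : ∑ k ∈ Finset.range (n + 1), aA n k * k
      = ∑ k ∈ Finset.range (n + 2), aA n k * k := by
    rw [Finset.sum_range_succ (fun k => aA n k * k) (n + 1), hz]
    ring
  have h2 : ∑ k ∈ Finset.range (n + 1), aA n k
      = ∑ k ∈ Finset.range (n + 2), aA n k := by
    rw [Finset.sum_range_succ (fun k => aA n k) (n + 1), hz]
    ring
  rw [h1, h2]
  have hs := sum_eq n
  rw [Finset.sum_add_distrib] at hs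
  rw [Finset.mul_sum, Finset.mul_sum, Finset.mul_sum]
  have e1 : ∑ k ∈ Finset.range (n + 2), 5 * (n : ℝ) * (aA n k * k)
      = ∑ k ∈ Finset.range (n + 2), 5 * (n : ℝ) * k * aA n k := by
    refine Finset.sum_congr rfl fun k _ => by ring
  have e2 : ∑ k ∈ Finset.range (n + 2), ((n : ℝ) + 1) * (8 * n + 3) * aA n k
      = ∑ k ∈ Finset.range (n + 2), ((n : ℝ) + 1) * (8 * n + 3) * aA n k := rfl
  rw [e1]
  linarith
end

section
/- For the Franel polynomial g_n(x) = Σ_{k=0}^n C(n,k)^3 x^k, one has (6n^2+4n+1) g_n(1) = (n+1) g_{n+1}'(1) + (7n−5) g_n'(1) − 6 g_n''(1) for all n ≥ 0. -/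
open Polynomial

/-- The Franel polynomial. -/
noncomputable def franelPoly (n : ℕ) : Polynomial ℝ :=
  ∑ k ∈ Finset.range (n + 1), C (((n.choose k) ^ 3 : ℕ) : ℝ) * X ^ k

lemma franel_eval (n : ℕ) :
    (franelPoly n).eval 1 = ∑ k ∈ Finset.range (n + 1), ((n.choose k : ℝ)) ^ 3 := by
  simp [franelPoly, eval_finset_sum]

lemma franel_deriv_eval (n : ℕ) :
    (derivative (franelPoly n)).eval 1
      = ∑ k ∈ Finset.range (n + 1), (k : ℝ) * ((n.choose k : ℝ)) ^ 3 := by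
  simp only [franelPoly, derivative_sum, derivative_C_mul_X_pow, eval_finset_sum]
  refine Finset.sum_congr rfl fun k _ => ?_
  simp; ring

lemma franel_deriv2_eval (n : ℕ) :
    (derivative (derivative (franelPoly n))).eval 1
      = ∑ k ∈ Finset.range (n + 1), (k : ℝ) * ((k : ℝ) - 1) * ((n.choose k : ℝ)) ^ 3 := by
  simp only [franelPoly, derivative_sum, derivative_C_mul_X_pow, eval_finset_sum]
  refine Finset.sum_congr rfl fun k _ => ?_
  cases k with
  | zero => simp
  | succ m => simp; ring

lemma franel_key (n : ℕ) :
    ∑ k ∈ Finset.range (n + 2),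
      ((6 * (n : ℝ) ^ 2 + 4 * n + 1 - (7 * n - 5) * k + 6 * k * ((k : ℝ) - 1))
          * ((n.choose k : ℝ)) ^ 3
        - ((n : ℝ) + 1) * k * (((n + 1).choose k : ℝ)) ^ 3) = 0 := by
  set H : ℕ → ℝ := fun k =>
    (k : ℝ) ^ 3 * (3 * (k : ℝ) ^ 2 - 8 * k * ((n : ℝ) + 1) + 6 * ((n : ℝ) + 1) ^ 2)
      * (((n + 1).choose k : ℝ)) ^ 3 with hH
  have hne : ((n : ℝ) + 1) ^ 3 ≠ 0 := by positivity
  have key : ∀ k ∈ Finset.range (n + 2),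
      ((n : ℝ) + 1) ^ 3 *
        ((6 * (n : ℝ) ^ 2 + 4 * n + 1 - (7 * n - 5) * k + 6 * k * ((k : ℝ) - 1))
            * ((n.choose k : ℝ)) ^ 3
          - ((n : ℝ) + 1) * k * (((n + 1).choose k : ℝ)) ^ 3)
        = H (k + 1) - H k := by
    intro k hk
    rw [Finset.mem_range] at hk
    have hk' : k ≤ n + 1 := by omega
    have h1 : ((n : ℝ) + 1) * (n.choose k : ℝ) = ((n : ℝ) + 1 - k) * ((n + 1).choose k : ℝ) := by
      have := Nat.choose_mul_succ_eq n k
      have hc : ((n.choose k * (n + 1) : ℕ) : ℝ) = (((n + 1).choose k * (n + 1 - k) : ℕ) : ℝ) :=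
        congrArg Nat.cast this
      push_cast [Nat.cast_sub hk'] at hc
      linarith
    have h2 : ((k : ℝ) + 1) * (((n + 1).choose (k + 1) : ℝ)) = ((n : ℝ) + 1) * (n.choose k : ℝ) := by
      have := Nat.add_one_mul_choose_eq n k
      have hc : (((n + 1) * n.choose k : ℕ) : ℝ) = (((n + 1).choose (k + 1) * (k + 1) : ℕ) : ℝ) :=
        congrArg Nat.cast this
      push_cast at hc
      linarith
    have h1c : (((n : ℝ) + 1) * (n.choose k : ℝ)) ^ 3
        = (((n : ℝ) + 1 - k) * ((n + 1).choose k : ℝ)) ^ 3 := by rw [h1]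
    have h2c : (((k : ℝ) + 1) * (((n + 1).choose (k + 1) : ℝ))) ^ 3
        = (((n : ℝ) + 1) * (n.choose k : ℝ)) ^ 3 := by rw [h2]
    simp only [hH]
    push_cast
    linear_combination
      (6 * (n : ℝ) ^ 2 + 4 * n + 1 - (7 * n - 5) * k + 6 * k * ((k : ℝ) - 1)
        - (3 * ((k : ℝ) + 1) ^ 2 - 8 * ((k : ℝ) + 1) * ((n : ℝ) + 1) + 6 * ((n : ℝ) + 1) ^ 2)) * h1c
      - (3 * ((k : ℝ) + 1) ^ 2 - 8 * ((k : ℝ) + 1) * ((n : ℝ) + 1) + 6 * ((n : ℝ) + 1) ^ 2) * h2c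
  have tele : ∑ k ∈ Finset.range (n + 2), (H (k + 1) - H k) = H (n + 2) - H 0 :=
    Finset.sum_range_sub H (n + 2)
  have hHn2 : H (n + 2) = 0 := by
    simp [hH, Nat.choose_eq_zero_of_lt (by omega : n + 1 < n + 2)]
  have hH0 : H 0 = 0 := by simp [hH]
  have := Finset.sum_congr rfl key
  rw [tele, hHn2, hH0, sub_zero, ← Finset.mul_sum] at this
  exact (mul_eq_zero.mp this).resolve_left hne

theorem franel_mixed_recurrence' (n : ℕ) :
    (6 * (n : ℝ) ^ 2 + 4 * n + 1) * (franelPoly n).eval 1 =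
      ((n : ℝ) + 1) * (derivative (franelPoly (n + 1))).eval 1
        + (7 * (n : ℝ) - 5) * (derivative (franelPoly n)).eval 1
        - 6 * (derivative (derivative (franelPoly n))).eval 1 := by
  rw [franel_eval, franel_deriv_eval, franel_deriv_eval, franel_deriv2_eval]
  have hz : (n.choose (n + 1) : ℝ) = 0 := by
    simp [Nat.choose_eq_zero_of_lt (by omega : n < n + 1)]
  have key := franel_key n
  rw [Finset.sum_sub_distrib] at key
  have e0 : ∑ k ∈ Finset.range (n + 2),
      (6 * (n : ℝ) ^ 2 + 4 * n + 1 - (7 * n - 5) * k + 6 * k * ((k : ℝ) - 1))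
        * ((n.choose k : ℝ)) ^ 3
      = (6 * (n : ℝ) ^ 2 + 4 * n + 1) * ∑ k ∈ Finset.range (n + 1), ((n.choose k : ℝ)) ^ 3
        - (7 * (n : ℝ) - 5) * ∑ k ∈ Finset.range (n + 1), (k : ℝ) * ((n.choose k : ℝ)) ^ 3
        + 6 * ∑ k ∈ Finset.range (n + 1), (k : ℝ) * ((k : ℝ) - 1) * ((n.choose k : ℝ)) ^ 3 := by
    rw [Finset.sum_range_succ, hz]
    rw [Finset.mul_sum, Finset.mul_sum, Finset.mul_sum, ← Finset.sum_sub_distrib,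
      ← Finset.sum_add_distrib]
    rw [show ((0:ℝ)^3) = 0 by ring, mul_zero, add_zero]
    exact Finset.sum_congr rfl fun k _ => by ring
  have e1 : ∑ k ∈ Finset.range (n + 2), ((n : ℝ) + 1) * k * (((n + 1).choose k : ℝ)) ^ 3
      = ((n : ℝ) + 1) * ∑ k ∈ Finset.range (n + 2), (k : ℝ) * (((n + 1).choose k : ℝ)) ^ 3 := by
    rw [Finset.mul_sum]
    exact Finset.sum_congr rfl fun k _ => by ring
  rw [e0, e1] at key
  linarith
end

section
/- The ratio of consecutive Apéry numbers converges: lim_{n→∞} f_{n+1}/f_n = (11 + 5√5)/2, where f_n = Σ_{k=0}^n C(n,k)^2 C(n+k,k). -/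
/-- Apéry numbers -/
def apery (n : ℕ) : ℕ := ∑ k ∈ Finset.range (n + 1), (n.choose k) ^ 2 * ((n + k).choose k)


noncomputable def T (m k : ℕ) : ℝ := (m.choose k)^2 * ((m+k).choose k)

lemma T_eq_zero {m k : ℕ} (h : m < k) : T m k = 0 := by
  simp [T, Nat.choose_eq_zero_of_lt h]

lemma lemA (m k : ℕ) : T (m+1) k * ((m:ℝ)+1-k)^2 = T m k * (m+1) * (m+1+k) := by
  rcases le_or_gt k (m+1) with hk | hk
  · have h1 : ((m+1).choose k : ℝ) * ((m:ℝ)+1-k) = (m.choose k : ℝ) * (m+1) := by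
      have := Nat.choose_mul_succ_eq m k
      have hc : ((m+1) - k : ℕ) = ((m:ℝ)+1-k) := by push_cast [hk]; ring
      calc ((m+1).choose k : ℝ) * ((m:ℝ)+1-k) = ((m+1).choose k : ℝ) * (((m+1)-k : ℕ) : ℝ) := by rw [hc]
        _ = (m.choose k : ℝ) * (m+1) := by exact_mod_cast congrArg (Nat.cast (R := ℝ)) this.symm
    have h2 : ((m+1+k).choose k : ℝ) * ((m:ℝ)+1) = ((m+k).choose k : ℝ) * ((m:ℝ)+1+k) := by
      have := Nat.choose_mul_succ_eq (m+k) k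
      have hs : m + k + 1 - k = m + 1 := by omega
      rw [hs] at this
      have : ((m+k).choose k : ℝ) * ((m:ℝ)+k+1) = ((m+k+1).choose k : ℝ) * ((m:ℝ)+1) := by
        exact_mod_cast congrArg (Nat.cast (R := ℝ)) this
      rw [show m+1+k = m+k+1 by ring]; linarith [this]
    simp only [T]
    push_cast
    linear_combination (((m+1+k).choose k : ℝ) * ((((m+1).choose k : ℝ)) * ((m:ℝ)+1-(k:ℝ)) + ((m.choose k : ℝ)) * ((m:ℝ)+1))) * h1 + (((m.choose k : ℝ))^2 * ((m:ℝ)+1)) * h2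
  · rw [T_eq_zero (by omega), T_eq_zero (by omega)]; ring

lemma lemB (n k : ℕ) : T n (k+1) * ((k:ℝ)+1)^3 = T n k * ((n:ℝ)-k)^2 * ((n:ℝ)+k+1) := by
  rcases lt_trichotomy k n with hk | hk | hk
  · have h1 : (n.choose (k+1) : ℝ) * ((k:ℝ)+1) = (n.choose k : ℝ) * ((n:ℝ)-k) := by
      have := Nat.choose_succ_right_eq n k
      have hc : ((n - k : ℕ) : ℝ) = (n:ℝ)-(k:ℝ) := by push_cast [le_of_lt hk]; ring
      calc (n.choose (k+1) : ℝ) * ((k:ℝ)+1) = ((n.choose (k+1) * (k+1) : ℕ) : ℝ) := by push_cast; ring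
        _ = ((n.choose k * (n-k) : ℕ) : ℝ) := by rw [this]
        _ = (n.choose k : ℝ) * ((n:ℝ)-k) := by push_cast; rw [hc]
    have h2 : ((n+k+1).choose (k+1) : ℝ) * ((k:ℝ)+1) = ((n+k).choose k : ℝ) * ((n:ℝ)+k+1) := by
      have := congrArg (Nat.cast (R := ℝ)) (Nat.add_one_mul_choose_eq (n+k) k)
      push_cast [Nat.succ_eq_add_one] at this
      linarith [this]
    simp only [T, show n + (k+1) = n+k+1 by ring]
    push_cast
    linear_combination (((n+k+1).choose (k+1) : ℝ) * ((k:ℝ)+1) * ((n.choose (k+1) : ℝ) * ((k:ℝ)+1) + (n.choose k : ℝ) * ((n:ℝ)-(k:ℝ)))) * h1 + ((n.choose k : ℝ)^2 * ((n:ℝ)-(k:ℝ))^2) * h2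
  · subst hk
    rw [T_eq_zero (by omega)]
    simp
  · rw [T_eq_zero (by omega), T_eq_zero (by omega)]; ring

noncomputable def g (n k : ℕ) : ℝ :=
  (k:ℝ)^3 * ((k:ℝ)^2 + (6*(n:ℝ)+7)*(k:ℝ) - (11*(n:ℝ)+15)*((n:ℝ)+2)) /
    (((n:ℝ)+2)*((n:ℝ)+1+(k:ℝ))*((n:ℝ)+2+(k:ℝ))) * T (n+2) k

lemma termwise (n k : ℕ) :
    ((n:ℝ)+2)^2 * T (n+2) k - (11*(n:ℝ)^2+33*(n:ℝ)+25) * T (n+1) k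
      - ((n:ℝ)+1)^2 * T n k = g n (k+1) - g n k := by
  have e1 := lemA n k
  have e2 : T (n+2) k * ((n:ℝ)+2-(k:ℝ))^2 = T (n+1) k * ((n:ℝ)+2) * ((n:ℝ)+2+(k:ℝ)) := by
    have := lemA (n+1) k; push_cast at this; linarith [this]
  have e3 : T (n+2) (k+1) * ((k:ℝ)+1)^3 = T (n+2) k * ((n:ℝ)+2-(k:ℝ))^2 * ((n:ℝ)+3+(k:ℝ)) := by
    have := lemB (n+2) k; push_cast at this
    calc T (n+2) (k+1) * ((k:ℝ)+1)^3 = T (n+2) k * ((n:ℝ)+2-(k:ℝ))^2 * ((n:ℝ)+2+(k:ℝ)+1) := this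
      _ = T (n+2) k * ((n:ℝ)+2-(k:ℝ))^2 * ((n:ℝ)+3+(k:ℝ)) := by ring
  have hk1 : ((k:ℝ)+1) ≠ 0 := by positivity
  have h1 : T (n+1) k = T (n+2) k * ((n:ℝ)+2-(k:ℝ))^2 / (((n:ℝ)+2)*((n:ℝ)+2+(k:ℝ))) := by
    rw [eq_div_iff (by positivity)]; linarith [e2]
  have h0 : T n k = T (n+2) k * (((n:ℝ)+2-(k:ℝ))^2*((n:ℝ)+1-(k:ℝ))^2) /
      (((n:ℝ)+1)*((n:ℝ)+2)*((n:ℝ)+1+(k:ℝ))*((n:ℝ)+2+(k:ℝ))) := by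
    rw [eq_div_iff (by positivity)]
    linear_combination (-(((n:ℝ)+2)*((n:ℝ)+2+(k:ℝ)))) * e1 - (((n:ℝ)+1-(k:ℝ))^2) * e2
  have h3 : T (n+2) (k+1) = T (n+2) k * (((n:ℝ)+2-(k:ℝ))^2 * ((n:ℝ)+3+(k:ℝ))) / ((k:ℝ)+1)^3 := by
    rw [eq_div_iff (by positivity)]; linarith [e3]
  rw [g, g, h0, h1, h3]
  push_cast
  field_simp
  ring

def apery' (n : ℕ) : ℕ := apery n

lemma apery'_cast (n m : ℕ) (h : n + 1 ≤ m) :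
    (apery' n : ℝ) = ∑ k ∈ Finset.range m, T n k := by
  rw [apery', apery]
  push_cast
  rw [Finset.sum_congr rfl (fun k (_ : k ∈ Finset.range (n+1)) =>
    show ((n.choose k : ℝ))^2 * ((n+k).choose k : ℝ) = T n k by rw [T])]
  exact Finset.sum_subset (Finset.range_subset_range.2 h)
    (fun k _ hk => T_eq_zero (by simp only [Finset.mem_range, not_lt] at hk; omega))

lemma apery'_rec (n : ℕ) :
    ((n:ℝ)+2)^2 * apery' (n+2) = (11*(n:ℝ)^2+33*(n:ℝ)+25) * apery' (n+1)
      + ((n:ℝ)+1)^2 * apery' n := by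
  have s0 := apery'_cast n (n+3) (by omega)
  have s1 := apery'_cast (n+1) (n+3) (by omega)
  have s2 := apery'_cast (n+2) (n+3) (by omega)
  have tele : ∑ k ∈ Finset.range (n+3), (g n (k+1) - g n k) = g n (n+3) - g n 0 :=
    Finset.sum_range_sub (g n) (n+3)
  have hg0 : g n 0 = 0 := by simp [g]
  have hgn : g n (n+3) = 0 := by rw [g, T_eq_zero (by omega)]; ring
  have key : ∑ k ∈ Finset.range (n+3),
      (((n:ℝ)+2)^2 * T (n+2) k - (11*(n:ℝ)^2+33*(n:ℝ)+25) * T (n+1) k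
        - ((n:ℝ)+1)^2 * T n k) = 0 := by
    rw [Finset.sum_congr rfl (fun k _ => termwise n k), tele, hg0, hgn]; ring
  rw [Finset.sum_sub_distrib, Finset.sum_sub_distrib, ← Finset.mul_sum, ← Finset.mul_sum,
    ← Finset.mul_sum] at key
  rw [s0, s1, s2]
  linarith [key]

lemma apery'_pos (n : ℕ) : 0 < apery' n := by
  rw [apery', apery]
  refine Finset.sum_pos' (fun i _ => Nat.zero_le _) ⟨0, Finset.mem_range.2 (by omega), by simp⟩

noncomputable def rr (n : ℕ) : ℝ := (apery' (n+1) : ℝ) / (apery' n : ℝ)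

lemma ap_pos (n : ℕ) : (0:ℝ) < (apery' n : ℝ) := by exact_mod_cast apery'_pos n

lemma rr_pos (n : ℕ) : 0 < rr n := div_pos (ap_pos (n+1)) (ap_pos n)

lemma rr_step (n : ℕ) : rr (n+1) * rr n * ((n:ℝ)+2)^2
    = (11*(n:ℝ)^2+33*(n:ℝ)+25) * rr n + ((n:ℝ)+1)^2 := by
  have h0 := (ap_pos n).ne'
  have h1 := (ap_pos (n+1)).ne'
  have hr : rr (n+1) * rr n = (apery' (n+2) : ℝ) / (apery' n : ℝ) := by
    rw [rr, rr, div_mul_div_comm, show n+1+1=n+2 from rfl]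
    rw [div_eq_div_iff (by positivity) h0]; ring
  have h2 : rr (n+1) * rr n * ((n:ℝ)+2)^2
      = (((n:ℝ)+2)^2 * (apery' (n+2):ℝ)) / (apery' n : ℝ) := by
    rw [hr]; ring
  rw [h2, apery'_rec n, rr, add_div, mul_div_assoc, mul_div_assoc, div_self h0, mul_one]

noncomputable def LL : ℝ := (11 + 5 * Real.sqrt 5) / 2

lemma sqrt5_sq : Real.sqrt 5 ^ 2 = 5 := Real.sq_sqrt (by norm_num)

lemma LL_gt : (11:ℝ) < LL := by
  have h := sqrt5_sq
  have h0 := Real.sqrt_nonneg 5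
  rw [LL]; nlinarith

lemma LL_lt : LL < 11.2 := by
  have h := sqrt5_sq
  have h0 := Real.sqrt_nonneg 5
  rw [LL]; nlinarith

lemma LL_eq : LL * LL = 11 * LL + 1 := by
  have h := sqrt5_sq
  rw [LL]; nlinarith

lemma rr_div (n : ℕ) : rr (n+1)
    = ((11*(n:ℝ)^2+33*(n:ℝ)+25) * rr n + ((n:ℝ)+1)^2) / (rr n * ((n:ℝ)+2)^2) := by
  have hx := rr_pos n
  rw [eq_div_iff (by positivity)]
  linear_combination rr_step n

lemma rr_gt (n : ℕ) (hn : 9 ≤ n) : 10 < rr (n+1) := by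
  have hx := rr_pos n
  have hn' : (9:ℝ) ≤ (n:ℝ) := by exact_mod_cast hn
  rw [rr_div n, lt_div_iff₀ (by positivity)]
  nlinarith [mul_pos hx (show (0:ℝ) < (n:ℝ)^2 - 7*(n:ℝ) - 15 by nlinarith)]

lemma rr_lt (n : ℕ) (hx10 : 10 < rr n) : rr (n+1) < 11.1 := by
  have hx := rr_pos n
  have hn0 : (0:ℝ) ≤ (n:ℝ) := Nat.cast_nonneg n
  rw [rr_div n, div_lt_iff₀ (by positivity)]
  nlinarith

set_option maxHeartbeats 1000000 in
lemma step_bound (x u δ nr : ℝ) (hx : 10 < x) (hnr : 0 ≤ nr) (hδ : δ * (nr+2) = 40)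
    (hu : u * x * (nr+2)^2 = (11*nr^2+33*nr+25)*x + (nr+1)^2) :
    |u - LL| ≤ δ + |x - LL|/110 := by
  have hL2 := LL_eq
  have hLgt := LL_gt
  have hLlt := LL_lt
  have hδ0 : 0 < δ := by nlinarith
  have hxN : (0:ℝ) < x * (nr+2)^2 := by positivity
  have hu' : u = ((11*nr^2+33*nr+25)*x + (nr+1)^2) / (x * (nr+2)^2) := by
    rw [eq_div_iff hxN.ne']; linear_combination hu
  set E := |x - LL| with hEdef
  have hE0 : 0 ≤ E := abs_nonneg _
  have hE1 : x - LL ≤ E := le_abs_self _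
  have hE2 : LL - x ≤ E := by rw [hEdef, abs_sub_comm]; exact le_abs_self _
  have hkey : 0 < x/110 - (LL - 11) := by nlinarith
  have hL2N : ((nr+2)^2) * (LL*LL) = ((nr+2)^2) * (11*LL+1) := by
    linear_combination ((nr+2)^2) * hL2
  have hδN : δ * (x*(nr+2)^2) = 40*(x*(nr+2)) := by
    linear_combination (x*(nr+2)) * hδ
  have hT3 : 0 ≤ (x-10)*(29*nr+61) := mul_nonneg (by linarith) (by linarith)
  have hxnr : (0:ℝ) ≤ x*(nr+2) := by positivity
  have hxnr2 : (0:ℝ) ≤ x*nr := mul_nonneg (by linarith) hnr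
  have h1 : LL - δ - E/110 ≤ u := by
    rw [hu', le_div_iff₀ hxN]
    rcases le_or_gt x LL with hc | hc
    · linarith [mul_nonneg (mul_nonneg (sub_nonneg.2 hc) (by linarith : (0:ℝ) ≤ LL - 11)) (sq_nonneg (nr+2)),
        mul_nonneg (mul_nonneg hE0 (by linarith : (0:ℝ) ≤ x)) (sq_nonneg (nr+2)),
        hT3, hL2N, hδN, hxnr, hxnr2]
    · linarith [mul_nonneg (mul_nonneg (sub_nonneg.2 hc.le) hkey.le) (sq_nonneg (nr+2)),
        mul_nonneg (mul_nonneg (by linarith : (0:ℝ) ≤ E-(x-LL)) (by linarith : (0:ℝ) ≤ x)) (sq_nonneg (nr+2)),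
        hT3, hL2N, hδN, hxnr, hxnr2]
  have h2 : u ≤ LL + δ + E/110 := by
    rw [hu', div_le_iff₀ hxN]
    rcases le_or_gt x LL with hc | hc
    · linarith [mul_nonneg (mul_nonneg (sub_nonneg.2 hc) hkey.le) (sq_nonneg (nr+2)),
        mul_nonneg (mul_nonneg (by linarith : (0:ℝ) ≤ E-(LL-x)) (by linarith : (0:ℝ) ≤ x)) (sq_nonneg (nr+2)),
        hL2N, hδN, hxnr, hxnr2]
    · linarith [mul_nonneg (mul_nonneg (sub_nonneg.2 hc.le) (by linarith : (0:ℝ) ≤ LL - 11)) (sq_nonneg (nr+2)),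
        mul_nonneg (mul_nonneg hE0 (by linarith : (0:ℝ) ≤ x)) (sq_nonneg (nr+2)),
        hL2N, hδN, hxnr, hxnr2]
  rw [abs_le]
  constructor <;> linarith

lemma err_step (n : ℕ) (hx : 10 < rr n) :
    |rr (n+1) - LL| ≤ 40/((n:ℝ)+2) + |rr n - LL|/110 :=
  step_bound (rr n) (rr (n+1)) (40/((n:ℝ)+2)) (n:ℝ) hx (Nat.cast_nonneg n)
    (div_mul_cancel₀ _ (by positivity)) (rr_step n)

lemma rr_big (n : ℕ) (hn : 10 ≤ n) : 10 < rr n := by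
  obtain ⟨m, rfl⟩ : ∃ m, n = m + 1 := ⟨n - 1, by omega⟩
  exact rr_gt m (by omega)

lemma err_small (n : ℕ) (hn : 11 ≤ n) : |rr n - LL| ≤ 2 := by
  obtain ⟨m, rfl⟩ : ∃ m, n = m + 1 := ⟨n - 1, by omega⟩
  have h1 : 10 < rr m := rr_big m (by omega)
  have h2 : rr (m+1) < 11.1 := rr_lt m h1
  have h3 : 10 < rr (m+1) := rr_gt m (by omega)
  have := LL_gt; have := LL_lt
  rw [abs_le]; constructor <;> linarith

lemma rr_tendsto : Filter.Tendsto rr Filter.atTop (nhds LL) := by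
  rw [Metric.tendsto_atTop]
  intro ε hε
  set N₀ : ℕ := max 11 ⌈(160:ℝ)/ε⌉₊ with hN₀
  have hN₀11 : 11 ≤ N₀ := le_max_left _ _
  have h40 : ∀ n : ℕ, N₀ ≤ n → 40/((n:ℝ)+2) ≤ ε/4 := by
    intro n hn
    have h1 : (160:ℝ)/ε ≤ (n:ℝ) := by
      calc (160:ℝ)/ε ≤ (⌈(160:ℝ)/ε⌉₊ : ℝ) := Nat.le_ceil _
        _ ≤ (N₀ : ℝ) := by exact_mod_cast Nat.cast_le.2 (le_max_right _ _)
        _ ≤ (n : ℝ) := by exact_mod_cast hn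
    rw [div_le_iff₀ (by positivity)]
    have : (160:ℝ) ≤ ε * (n:ℝ) := by
      rw [div_le_iff₀ hε] at h1; linarith [h1]
    nlinarith
  have claim : ∀ m : ℕ, |rr (N₀ + m) - LL| ≤ 2/2^m + ε/2 := by
    intro m
    induction m with
    | zero => simpa using le_add_of_le_of_nonneg (err_small N₀ hN₀11) (by positivity)
    | succ m ih =>
      have hstep := err_step (N₀ + m) (rr_big _ (by omega))
      have h40' := h40 (N₀ + m) (by omega)
      have hp : (0:ℝ) < 2^m := by positivity
      have h1 : (2:ℝ)/2^(m+1) = 1/2^m := by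
        rw [pow_succ, mul_comm, ← div_div]; norm_num
      have h2 : ((2:ℝ)/2^m)/110 ≤ (1/2^m)/2 := by
        rw [div_div, div_div, div_le_div_iff₀ (by positivity) (by positivity)]
        nlinarith
      have h3 : (0:ℝ) < 1/2^m := by positivity
      have hdiv : |rr (N₀+m) - LL|/110 ≤ (2/2^m + ε/2)/110 :=
        (div_le_div_iff_of_pos_right (by norm_num)).2 ih
      have hcast : ((N₀ + m : ℕ):ℝ) + 2 = (N₀:ℝ) + (m:ℝ) + 2 := by push_cast; ring
      have : N₀ + (m+1) = (N₀ + m) + 1 := by omega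
      rw [this]
      calc |rr ((N₀ + m) + 1) - LL| ≤ 40/(((N₀+m:ℕ):ℝ)+2) + |rr (N₀+m) - LL|/110 := hstep
        _ ≤ ε/4 + (2/2^m + ε/2)/110 := add_le_add h40' hdiv
        _ = ε/4 + (2/2^m)/110 + (ε/2)/110 := by ring
        _ ≤ 2/2^(m+1) + ε/2 := by rw [h1]; linarith
  obtain ⟨M, hM⟩ := pow_unbounded_of_one_lt (4/ε) (one_lt_two (α := ℝ))
  refine ⟨N₀ + M, fun n hn => ?_⟩
  rw [Real.dist_eq]
  calc |rr n - LL| = |rr (N₀ + (n - N₀)) - LL| := by rw [show N₀ + (n - N₀) = n by omega]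
    _ ≤ 2/2^(n-N₀) + ε/2 := claim _
    _ < ε := by
        have h1 : (2:ℝ)^M ≤ 2^(n-N₀) := pow_le_pow_right₀ one_le_two (by omega)
        have h2 : (0:ℝ) < 2^M := by positivity
        have h3 : (0:ℝ) < 2^(n-N₀) := by positivity
        have h4 : (2:ℝ)/2^(n-N₀) ≤ 2/2^M := by
          rw [div_le_div_iff₀ h3 h2]; nlinarith
        have h5 : (2:ℝ)/2^M < ε/2 := by
          rw [div_lt_div_iff₀ h2 (by norm_num)]
          have := (div_lt_iff₀ hε).1 hM
          nlinarith
        linarith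


theorem apery_ratio_limit :
    Filter.Tendsto (fun n : ℕ => (apery (n + 1) : ℝ) / (apery n : ℝ))
      Filter.atTop (nhds ((11 + 5 * Real.sqrt 5) / 2)) := by
  have ht := rr_tendsto
  exact ht
end
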